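/- arXiv:2603.08959 — 4 statements merged into one kernel-verified Lean document; each statement's English description precedes it below -/
import Mathlib

section
/- Let a_1,...,a_n > 0 with sum 1 and partial sums S_i. For every positive integer k, ∑_{i=1}^n a_i · (1 - S_i^k) ≤ k/(k+1). -/
open Finset

lemma pow_sub_pow_le_aux (x y : ℝ) (hy : 0 ≤ y) (hxy : y ≤ x) (m : ℕ) :
    x ^ (m + 1) - y ^ (m + 1) ≤ ((m : ℝ) + 1) * ((x - y) * x ^ m) := by
  rw [← geom_sum₂_mul]
  have hx : 0 ≤ x := hy.trans hxy
  have h : ∑ i ∈ range (m + 1), x ^ i * y ^ (m + 1 - 1 - i) ≤ ((m : ℝ) + 1) * x ^ m := by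
    calc ∑ i ∈ range (m + 1), x ^ i * y ^ (m + 1 - 1 - i)
        ≤ ∑ _i ∈ range (m + 1), x ^ m := by
          apply Finset.sum_le_sum
          intro i hi
          simp only [Finset.mem_range] at hi
          calc x ^ i * y ^ (m + 1 - 1 - i)
              ≤ x ^ i * x ^ (m + 1 - 1 - i) := by
                exact mul_le_mul_of_nonneg_left (pow_le_pow_left₀ hy hxy _) (pow_nonneg hx i)
            _ = x ^ m := by rw [← pow_add]; congr 1; omega
      _ = ((m : ℝ) + 1) * x ^ m := by
          rw [Finset.sum_const, card_range, nsmul_eq_mul]; push_cast; ring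
  calc (∑ i ∈ range (m + 1), x ^ i * y ^ (m + 1 - 1 - i)) * (x - y)
      ≤ (((m : ℝ) + 1) * x ^ m) * (x - y) :=
        mul_le_mul_of_nonneg_right h (by linarith)
    _ = ((m : ℝ) + 1) * ((x - y) * x ^ m) := by ring

theorem poly_inequality (n : ℕ) (a : ℕ → ℝ)
    (ha : ∀ i < n, 0 < a i) (hsum : ∑ i ∈ Finset.range n, a i = 1)
    (k : ℕ) (hk : 0 < k) :
    ∑ i ∈ Finset.range n, a i * (1 - (∑ j ∈ Finset.range (i + 1), a j) ^ k)
      ≤ (k : ℝ) / (k + 1) := by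
  set S : ℕ → ℝ := fun i => ∑ j ∈ range i, a j with hSdef
  have hS0 : S 0 = 0 := by simp [hSdef]
  have hSn : S n = 1 := hsum
  have hstep : ∀ i, S (i + 1) = S i + a i := by
    intro i; simp [hSdef, Finset.sum_range_succ]
  have hnn : ∀ i ≤ n, 0 ≤ S i := by
    intro i hi
    apply Finset.sum_nonneg
    intro j hj
    exact (ha j (lt_of_lt_of_le (Finset.mem_range.mp hj) hi)).le
  have hkpos : (0 : ℝ) < (k : ℝ) + 1 := by positivity
  -- termwise bound
  have hterm : ∀ i ∈ range n,
      a i * (1 - S (i + 1) ^ k)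
        ≤ (S (i + 1) - S i) - (S (i + 1) ^ (k + 1) - S i ^ (k + 1)) / ((k : ℝ) + 1) := by
    intro i hi
    rw [Finset.mem_range] at hi
    have hai : 0 < a i := ha i hi
    have hSi : 0 ≤ S i := hnn i hi.le
    have hSi1 : S i ≤ S (i + 1) := by rw [hstep]; linarith
    have key := pow_sub_pow_le_aux (S (i + 1)) (S i) hSi hSi1 k
    have hdiff : S (i + 1) - S i = a i := by rw [hstep]; ring
    rw [hdiff] at key
    have hd : (S (i + 1) ^ (k + 1) - S i ^ (k + 1)) / ((k : ℝ) + 1)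
        ≤ a i * S (i + 1) ^ k := by
      rw [div_le_iff₀ hkpos]
      nlinarith [key]
    have heq : a i * (1 - S (i + 1) ^ k) = a i - a i * S (i + 1) ^ k := by ring
    rw [heq, hdiff]
    linarith [hd]
  calc ∑ i ∈ range n, a i * (1 - S (i + 1) ^ k)
      ≤ ∑ i ∈ range n,
          ((S (i + 1) - S i) - (S (i + 1) ^ (k + 1) - S i ^ (k + 1)) / ((k : ℝ) + 1)) :=
        Finset.sum_le_sum hterm
    _ = (S n - S 0) - (S n ^ (k + 1) - S 0 ^ (k + 1)) / ((k : ℝ) + 1) := by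
        rw [Finset.sum_sub_distrib, Finset.sum_range_sub, ← Finset.sum_div,
          Finset.sum_range_sub (fun i => S i ^ (k + 1))]
    _ = (k : ℝ) / (k + 1) := by
        rw [hS0, hSn]
        field_simp
        simp
end

section
/- Let a_1,...,a_n > 0 with sum 1 and partial sums S_i, with n ≥ 2. For every positive integer k, the inequality ∑_{i=1}^n a_i · (1 - S_i^k) < k/(k+1) is strict. -/
open Finset

lemma key_pow_ineq (k : ℕ) (hk : 0 < k) (x y : ℝ) (hy : 0 ≤ y) (hxy : y < x) :
    x ^ (k + 1) - y ^ (k + 1) < (k + 1) * (x - y) * x ^ k := by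
  have hx : 0 < x := lt_of_le_of_lt hy hxy
  rw [← geom_sum₂_mul]
  have hsum : ∑ i ∈ range (k + 1), x ^ i * y ^ (k + 1 - 1 - i) < (k + 1) * x ^ k := by
    have h1 : ∑ i ∈ range (k + 1), x ^ i * y ^ (k + 1 - 1 - i)
        < ∑ _i ∈ range (k + 1), x ^ k := by
      apply Finset.sum_lt_sum
      · intro i hi
        have hik : i ≤ k := Nat.lt_succ_iff.mp (Finset.mem_range.mp hi)
        simp only [Nat.add_sub_cancel]
        calc x ^ i * y ^ (k - i) ≤ x ^ i * x ^ (k - i) := by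
              apply mul_le_mul_of_nonneg_left
              · exact pow_le_pow_left₀ hy hxy.le _
              · positivity
          _ = x ^ k := by
              rw [← pow_add]
              congr 1
              omega
      · refine ⟨0, Finset.mem_range.mpr (by omega), ?_⟩
        simp only [Nat.add_sub_cancel, pow_zero, one_mul, Nat.sub_zero]
        exact pow_lt_pow_left₀ hxy hy (by omega)
    simpa using h1
  have hxy' : 0 < x - y := sub_pos.mpr hxy
  calc (∑ i ∈ range (k + 1), x ^ i * y ^ (k + 1 - 1 - i)) * (x - y)
      < ((k + 1) * x ^ k) * (x - y) := by
        exact mul_lt_mul_of_pos_right hsum hxy'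
    _ = (k + 1) * (x - y) * x ^ k := by ring

theorem poly_inequality_strict (n : ℕ) (hn : 2 ≤ n) (a : ℕ → ℝ)
    (ha : ∀ i < n, 0 < a i) (hsum : ∑ i ∈ Finset.range n, a i = 1)
    (k : ℕ) (hk : 0 < k) :
    ∑ i ∈ Finset.range n, a i * (1 - (∑ j ∈ Finset.range (i + 1), a j) ^ k)
      < (k : ℝ) / (k + 1) := by
  set S : ℕ → ℝ := fun i => ∑ j ∈ Finset.range i, a j with hS
  have hSnonneg : ∀ i ≤ n, 0 ≤ S i := by
    intro i hi
    apply Finset.sum_nonneg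
    intro j hj
    have := Finset.mem_range.mp hj
    exact (ha j (by omega)).le
  have hSstep : ∀ i, S (i + 1) = S i + a i := by
    intro i
    simp [hS, Finset.sum_range_succ]
  have hSlt : ∀ i < n, S i < S (i + 1) := by
    intro i hi
    rw [hSstep i]
    linarith [ha i hi]
  -- telescoping
  have htel : ∑ i ∈ Finset.range n, (S (i + 1) ^ (k + 1) - S i ^ (k + 1))
      = 1 := by
    rw [Finset.sum_range_sub (fun i => S i ^ (k + 1))]
    simp [hS, hsum]
  have hmain : (1 : ℝ) < (k + 1) * ∑ i ∈ Finset.range n, a i * S (i + 1) ^ k := by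
    calc (1 : ℝ) = ∑ i ∈ Finset.range n, (S (i + 1) ^ (k + 1) - S i ^ (k + 1)) := htel.symm
      _ < ∑ i ∈ Finset.range n, ((k : ℝ) + 1) * (a i * S (i + 1) ^ k) := by
          apply Finset.sum_lt_sum_of_nonempty
          · exact Finset.nonempty_range_iff.mpr (by omega)
          · intro i hi
            have hi' : i < n := Finset.mem_range.mp hi
            have h := key_pow_ineq k hk (S (i + 1)) (S i)
              (hSnonneg i hi'.le) (hSlt i hi')
            have hstep : S (i + 1) - S i = a i := by rw [hSstep]; ring
            calc S (i + 1) ^ (k + 1) - S i ^ (k + 1)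
                < (k + 1) * (S (i + 1) - S i) * S (i + 1) ^ k := h
              _ = ((k : ℝ) + 1) * (a i * S (i + 1) ^ k) := by rw [hstep]; ring
      _ = (k + 1) * ∑ i ∈ Finset.range n, a i * S (i + 1) ^ k := (Finset.mul_sum _ _ _).symm
  have hexp : ∑ i ∈ Finset.range n, a i * (1 - (∑ j ∈ Finset.range (i + 1), a j) ^ k)
      = 1 - ∑ i ∈ Finset.range n, a i * S (i + 1) ^ k := by
    have heq : ∑ i ∈ Finset.range n, a i * (1 - (∑ j ∈ Finset.range (i + 1), a j) ^ k)
        = ∑ i ∈ Finset.range n, (a i - a i * S (i + 1) ^ k) := by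
      apply Finset.sum_congr rfl
      intro i _
      simp only [hS]
      ring
    rw [heq, Finset.sum_sub_distrib, hsum]
  rw [hexp]
  have hk1 : (0 : ℝ) < (k : ℝ) + 1 := by positivity
  rw [lt_div_iff₀ hk1]
  nlinarith [hmain]
end

section
/- Let a_1,...,a_n > 0 sum to 1 with partial sums S_i. Then ∑_{i=1}^n a_i · ln(2 - S_i) ≤ 2·ln 2 - 1. -/
open Finset

noncomputable def Faux (x : ℝ) : ℝ := -(2 - x) * Real.log (2 - x) - x

lemma Faux_step {s t : ℝ} (hs : 0 ≤ s) (hst : s ≤ t) (ht : t ≤ 1) :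
    (t - s) * Real.log (2 - t) ≤ Faux t - Faux s := by
  have hv : (0:ℝ) < 2 - t := by linarith
  have hu : (0:ℝ) < 2 - s := by linarith
  have hvu : 0 < (2 - t) / (2 - s) := div_pos hv hu
  have h1 : Real.log ((2 - t) / (2 - s)) ≤ (2 - t) / (2 - s) - 1 :=
    Real.log_le_sub_one_of_pos hvu
  rw [Real.log_div (ne_of_gt hv) (ne_of_gt hu)] at h1
  have h2 : (2 - s) * (Real.log (2 - t) - Real.log (2 - s)) ≤ (2 - t) - (2 - s) := by
    have := mul_le_mul_of_nonneg_left h1 (le_of_lt hu)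
    calc (2 - s) * (Real.log (2 - t) - Real.log (2 - s)) ≤
        (2 - s) * ((2 - t) / (2 - s) - 1) := this
      _ = (2 - t) - (2 - s) := by field_simp
  unfold Faux
  nlinarith [h2]

theorem log_inequality (n : ℕ) (a : ℕ → ℝ)
    (ha : ∀ i < n, 0 < a i) (hsum : ∑ i ∈ Finset.range n, a i = 1) :
    ∑ i ∈ Finset.range n, a i * Real.log (2 - ∑ j ∈ Finset.range (i + 1), a j)
      ≤ 2 * Real.log 2 - 1 := by
  set S : ℕ → ℝ := fun i => ∑ j ∈ Finset.range i, a j with hS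
  have hmono : ∀ i j, i ≤ j → j ≤ n → S i ≤ S j := by
    intro i j hij hjn
    apply Finset.sum_le_sum_of_subset_of_nonneg (Finset.range_subset_range.2 hij)
    intro k hk _
    exact le_of_lt (ha k (lt_of_lt_of_le (Finset.mem_range.1 hk) hjn))
  have hS0 : S 0 = 0 := by simp [hS]
  have hSn : S n = 1 := hsum
  have key : ∀ i ∈ Finset.range n,
      a i * Real.log (2 - S (i + 1)) ≤ Faux (S (i + 1)) - Faux (S i) := by
    intro i hi
    have hin : i < n := Finset.mem_range.1 hi
    have hstep : S (i + 1) - S i = a i := by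
      simp [hS, Finset.sum_range_succ]
    have h0 : 0 ≤ S i := by
      rw [← hS0]; exact hmono 0 i (Nat.zero_le _) (le_of_lt hin)
    have h1 : S i ≤ S (i + 1) := hmono i (i + 1) (Nat.le_succ _) hin
    have h2 : S (i + 1) ≤ 1 := by rw [← hSn]; exact hmono (i + 1) n hin le_rfl
    have := Faux_step h0 h1 h2
    rw [hstep] at this
    exact this
  calc ∑ i ∈ Finset.range n, a i * Real.log (2 - ∑ j ∈ Finset.range (i + 1), a j)
      ≤ ∑ i ∈ Finset.range n, (Faux (S (i + 1)) - Faux (S i)) :=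
        Finset.sum_le_sum key
    _ = Faux (S n) - Faux (S 0) := Finset.sum_range_sub (fun i => Faux (S i)) n
    _ = 2 * Real.log 2 - 1 := by
        rw [hS0, hSn]
        simp [Faux, Real.log_one]
        ring_nf
        rw [Real.log_one]
        ring
end

section
/- Let a_1,...,a_n > 0 sum to 1 with partial sums S_i. Then ∑_{i=1}^n a_i · cos(π S_i / 2) ≤ 2/π. -/
open Finset Real

lemma key_cos (x y : ℝ) (hx : 0 ≤ x) (hxy : x ≤ y) (hy : y ≤ π / 2) :
    (y - x) * Real.cos y ≤ Real.sin y - Real.sin x := by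
  have hyπ : y ≤ π := le_trans hy (by linarith [Real.pi_pos])
  have h1 : Real.sin y - Real.sin x = ∫ t in x..y, Real.cos t := by
    rw [integral_cos]
  have h2 : (y - x) * Real.cos y = ∫ _t in x..y, Real.cos y := by
    simp [intervalIntegral.integral_const, smul_eq_mul]
  rw [h1, h2]
  apply intervalIntegral.integral_mono_on hxy (intervalIntegrable_const)
    (Real.continuous_cos.intervalIntegrable x y)
  intro t ht
  rcases ht with ⟨ht1, ht2⟩
  exact Real.cos_le_cos_of_nonneg_of_le_pi (le_trans hx ht1) hyπ ht2

theorem cos_inequality (n : ℕ) (a : ℕ → ℝ)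
    (ha : ∀ i < n, 0 < a i) (hsum : ∑ i ∈ Finset.range n, a i = 1) :
    ∑ i ∈ Finset.range n, a i * Real.cos (π * (∑ j ∈ Finset.range (i + 1), a j) / 2)
      ≤ 2 / π := by
  have hπ : (0:ℝ) < π := Real.pi_pos
  set S : ℕ → ℝ := fun i => ∑ j ∈ Finset.range i, a j with hS
  have hS0 : ∀ i ≤ n, 0 ≤ S i := by
    intro i hi
    apply Finset.sum_nonneg
    intro j hj
    exact le_of_lt (ha j (lt_of_lt_of_le (Finset.mem_range.mp hj) hi))
  have hS1 : ∀ i ≤ n, S i ≤ 1 := by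
    intro i hi
    rw [← hsum]
    apply Finset.sum_le_sum_of_subset_of_nonneg (Finset.range_subset_range.mpr hi)
    intro j hj _
    exact le_of_lt (ha j (Finset.mem_range.mp hj))
  have key : ∀ i ∈ Finset.range n,
      a i * Real.cos (π * S (i + 1) / 2)
        ≤ (2 / π) * Real.sin (π * S (i + 1) / 2) - (2 / π) * Real.sin (π * S i / 2) := by
    intro i hi
    have hin : i < n := Finset.mem_range.mp hi
    have hstep : S (i + 1) = S i + a i := by
      simp [hS, Finset.sum_range_succ]
    have hx : 0 ≤ π * S i / 2 := by
      have := hS0 i (le_of_lt hin)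
      positivity
    have hxy : π * S i / 2 ≤ π * S (i + 1) / 2 := by
      have := (ha i hin).le
      rw [hstep]; nlinarith
    have hy : π * S (i + 1) / 2 ≤ π / 2 := by
      have := hS1 (i + 1) hin
      nlinarith
    have h := key_cos _ _ hx hxy hy
    have hdiff : π * S (i + 1) / 2 - π * S i / 2 = π / 2 * a i := by
      rw [hstep]; ring
    rw [hdiff] at h
    have h2 : (2 / π) * (π / 2 * a i * Real.cos (π * S (i + 1) / 2))
        ≤ (2 / π) * (Real.sin (π * S (i + 1) / 2) - Real.sin (π * S i / 2)) := by
      apply mul_le_mul_of_nonneg_left h (by positivity)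
    calc a i * Real.cos (π * S (i + 1) / 2)
        = (2 / π) * (π / 2 * a i * Real.cos (π * S (i + 1) / 2)) := by
          field_simp
      _ ≤ (2 / π) * (Real.sin (π * S (i + 1) / 2) - Real.sin (π * S i / 2)) := h2
      _ = (2 / π) * Real.sin (π * S (i + 1) / 2) - (2 / π) * Real.sin (π * S i / 2) := by
          ring
  calc ∑ i ∈ Finset.range n, a i * Real.cos (π * (∑ j ∈ Finset.range (i + 1), a j) / 2)
      ≤ ∑ i ∈ Finset.range n,
          ((2 / π) * Real.sin (π * S (i + 1) / 2) - (2 / π) * Real.sin (π * S i / 2)) :=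
        Finset.sum_le_sum key
    _ = (2 / π) * Real.sin (π * S n / 2) - (2 / π) * Real.sin (π * S 0 / 2) :=
        Finset.sum_range_sub (fun i => (2 / π) * Real.sin (π * S i / 2)) n
    _ = 2 / π := by
        have h1 : π * S n / 2 = π / 2 := by
          simp only [hS]; rw [hsum]; ring
        have h0 : π * S 0 / 2 = 0 := by simp [hS]
        rw [h1, h0, Real.sin_pi_div_two, Real.sin_zero, mul_one, mul_zero, sub_zero]
end
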